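/- arXiv:2305.14859 — 8 statements merged into one kernel-verified Lean document; each statement's English description precedes it below -/
import Mathlib

section
/- Let d ≥ 1, let P : Fin d → ℝ be a probability vector, and let J(q) = Σ_i P i · q i − Σ_i σ(q) i · q i where σ(q) is the softmax of q. If q* : Fin d → ℝ is a local maximum of J, then for every index a, σ(q*) a · (1 + q* a − Σ_b σ(q*) b · q* b) = P a. -/
noncomputable def softmax {d : ℕ} (q : Fin d → ℝ) (i : Fin d) : ℝ :=
  Real.exp (q i) / ∑ j, Real.exp (q j)

noncomputable def mabeJ {d : ℕ} (P q : Fin d → ℝ) : ℝ :=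
  (∑ i, P i * q i) - ∑ i, softmax q i * q i

theorem mabe_local_max_dual_prob {d : ℕ} (hd : 1 ≤ d) (P : Fin d → ℝ)
    (hP0 : ∀ i, 0 ≤ P i) (hP1 : ∑ i, P i = 1)
    (qstar : Fin d → ℝ) (hmax : IsLocalMax (mabeJ P) qstar) :
    ∀ a, softmax qstar a * (1 + qstar a - ∑ b, softmax qstar b * qstar b) = P a := by
  intro a
  set S' : ℝ := ∑ j ∈ Finset.univ.erase a, Real.exp (qstar j) with hS'
  set N' : ℝ := ∑ j ∈ Finset.univ.erase a, Real.exp (qstar j) * qstar j with hN'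
  set C' : ℝ := ∑ i ∈ Finset.univ.erase a, P i * qstar i with hC'
  have hS'0 : 0 ≤ S' := Finset.sum_nonneg fun j _ => (Real.exp_pos _).le
  have hEx : ∀ x : ℝ, (0:ℝ) < Real.exp x + S' :=
    fun x => add_pos_of_pos_of_nonneg (Real.exp_pos _) hS'0
  set f : ℝ → ℝ := fun x => (P a * x + C') - (Real.exp x * x + N') / (Real.exp x + S') with hf
  have h1 : ∀ x : ℝ, (∑ j, Real.exp (Function.update qstar a x j)) = Real.exp x + S' := by
    intro x
    rw [← Finset.add_sum_erase Finset.univ _ (Finset.mem_univ a), Function.update_self]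
    congr 1
    exact Finset.sum_congr rfl fun j hj => by
      rw [Function.update_of_ne (Finset.ne_of_mem_erase hj)]
  have h2 : ∀ x : ℝ, (∑ j, Real.exp (Function.update qstar a x j) * Function.update qstar a x j)
      = Real.exp x * x + N' := by
    intro x
    rw [← Finset.add_sum_erase Finset.univ _ (Finset.mem_univ a), Function.update_self]
    congr 1
    exact Finset.sum_congr rfl fun j hj => by
      rw [Function.update_of_ne (Finset.ne_of_mem_erase hj)]
  have h3 : ∀ x : ℝ, (∑ i, P i * Function.update qstar a x i) = P a * x + C' := by
    intro x
    rw [← Finset.add_sum_erase Finset.univ _ (Finset.mem_univ a), Function.update_self]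
    congr 1
    exact Finset.sum_congr rfl fun j hj => by
      rw [Function.update_of_ne (Finset.ne_of_mem_erase hj)]
  have hEq : ∀ x : ℝ, mabeJ P (Function.update qstar a x) = f x := by
    intro x
    simp only [mabeJ, softmax, hf]
    rw [h3 x]
    congr 1
    rw [← h2 x, Finset.sum_div]
    refine Finset.sum_congr rfl fun i _ => ?_
    rw [h1 x, div_mul_eq_mul_div]
  have hupdate : Function.update qstar a (qstar a) = qstar := Function.update_eq_self a qstar
  have hcont : Continuous (fun x : ℝ => Function.update qstar a x) := by
    refine continuous_pi fun j => ?_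
    simp only [Function.update_apply]
    by_cases h : j = a
    · simpa [h] using continuous_id'
    · simpa [h] using (continuous_const : Continuous fun _ : ℝ => qstar j)
  have hfmax : IsLocalMax f (qstar a) := by
    have ht : Filter.Tendsto (fun x : ℝ => Function.update qstar a x) (nhds (qstar a))
        (nhds qstar) := by
      have := hcont.tendsto (qstar a)
      rwa [hupdate] at this
    have h := ht.eventually hmax
    refine h.mono fun x hx => ?_
    rw [← hEq x]
    calc mabeJ P (Function.update qstar a x) ≤ mabeJ P qstar := hx
      _ = mabeJ P (Function.update qstar a (qstar a)) := by rw [hupdate]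
      _ = f (qstar a) := hEq _
  set E : ℝ := Real.exp (qstar a) + S' with hE
  set D : ℝ := P a - ((Real.exp (qstar a) * qstar a + Real.exp (qstar a)) * E -
      (Real.exp (qstar a) * qstar a + N') * Real.exp (qstar a)) / E ^ 2 with hD
  have hderiv : HasDerivAt f D (qstar a) := by
    have hu : HasDerivAt (fun x : ℝ => Real.exp x * x + N')
        (Real.exp (qstar a) * qstar a + Real.exp (qstar a)) (qstar a) := by
      have := (Real.hasDerivAt_exp (qstar a)).mul (hasDerivAt_id (qstar a))
      simpa using this.add_const N'
    have hv : HasDerivAt (fun x : ℝ => Real.exp x + S') (Real.exp (qstar a)) (qstar a) :=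
      (Real.hasDerivAt_exp _).add_const S'
    have hq := hu.div hv (ne_of_gt (hEx (qstar a)))
    have hp : HasDerivAt (fun x : ℝ => P a * x + C') (P a) (qstar a) := by
      simpa using ((hasDerivAt_id (qstar a)).const_mul (P a)).add_const C'
    exact hp.sub hq
  have hD0 : D = 0 := by
    rw [← hderiv.deriv]
    exact hfmax.deriv_eq_zero
  have hEsum : (∑ j, Real.exp (qstar j)) = E := by
    have := h1 (qstar a); rwa [hupdate] at this
  have hNsum : (∑ b, softmax qstar b * qstar b) = (Real.exp (qstar a) * qstar a + N') / E := by
    have h2' := h2 (qstar a); rw [hupdate] at h2'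
    rw [← h2', Finset.sum_div]
    refine Finset.sum_congr rfl fun i _ => ?_
    rw [softmax, hEsum, div_mul_eq_mul_div]
  have hPa : P a = ((Real.exp (qstar a) * qstar a + Real.exp (qstar a)) * E -
      (Real.exp (qstar a) * qstar a + N') * Real.exp (qstar a)) / E ^ 2 := by
    have := hD0
    rw [hD] at this
    linarith
  rw [softmax, hEsum, hNsum, hPa]
  have hE0 : E ≠ 0 := ne_of_gt (hEx (qstar a))
  field_simp
  ring
end

section
/- Let d ≥ 1, let P : Fin d → ℝ be a probability vector, and let J(q) = Σ_i P i · q i − Σ_i σ(q) i · q i where σ(q) is the softmax of q. If q* is a local maximum of J, then every index b with P b = 0 is assigned the same utility one unit below the average: q* b = (Σ_a σ(q*) a · q* a) − 1. -/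
theorem mabe_local_max_undesired_utility {d : ℕ} (hd : 1 ≤ d) (P : Fin d → ℝ)
    (hP0 : ∀ i, 0 ≤ P i) (hP1 : ∑ i, P i = 1)
    (qstar : Fin d → ℝ) (hmax : IsLocalMax (mabeJ P) qstar) :
    ∀ b, P b = 0 → qstar b = (∑ a, softmax qstar a * qstar a) - 1 := by
  intro b hb
  set t0 := qstar b with ht0
  set S : ℝ := ∑ j ∈ Finset.univ.erase b, Real.exp (qstar j) with hS
  set A : ℝ := ∑ j ∈ Finset.univ.erase b, Real.exp (qstar j) * qstar j with hA
  set C : ℝ := ∑ j ∈ Finset.univ.erase b, P j * qstar j with hC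
  have hSnn : 0 ≤ S := Finset.sum_nonneg fun j _ => (Real.exp_pos _).le
  set f : ℝ → ℝ := fun t => C + P b * t - (A + Real.exp t * t) / (S + Real.exp t) with hf
  have hDpos : ∀ t : ℝ, 0 < S + Real.exp t := fun t => by positivity
  -- f agrees with J along the coordinate line
  have hfe : ∀ t : ℝ, mabeJ P (Function.update qstar b t) = f t := by
    intro t
    have h1 : ∀ (g : ℝ → ℝ), ∑ i, g (Function.update qstar b t i)
        = g t + ∑ j ∈ Finset.univ.erase b, g (qstar j) := by
      intro g
      rw [← Finset.add_sum_erase _ _ (Finset.mem_univ b)]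
      congr 1
      · simp
      · exact Finset.sum_congr rfl fun j hj => by
          rw [Function.update_of_ne (Finset.ne_of_mem_erase hj)]
    have h2 : ∀ (g : Fin d → ℝ → ℝ), ∑ i, g i (Function.update qstar b t i)
        = g b t + ∑ j ∈ Finset.univ.erase b, g j (qstar j) := by
      intro g
      rw [← Finset.add_sum_erase _ _ (Finset.mem_univ b)]
      congr 1
      · simp
      · exact Finset.sum_congr rfl fun j hj => by
          rw [Function.update_of_ne (Finset.ne_of_mem_erase hj)]
    have hD : ∑ j, Real.exp (Function.update qstar b t j) = S + Real.exp t := by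
      rw [h1 (fun x => Real.exp x)]; ring
    simp only [mabeJ, softmax, hD]
    rw [h2 (fun i x => P i * x), h2 (fun i x => Real.exp x / (S + Real.exp t) * x)]
    have : ∑ j ∈ Finset.univ.erase b, Real.exp (qstar j) / (S + Real.exp t) * qstar j
        = A / (S + Real.exp t) := by
      rw [hA, Finset.sum_div]
      exact Finset.sum_congr rfl fun j _ => by ring
    rw [this, hf]
    have hne := (hDpos t).ne'
    have hCe : ∑ j : Fin d, P j * qstar j = C + P b * qstar b := by
      rw [hC, ← Finset.add_sum_erase _ _ (Finset.mem_univ b)]; ring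
    field_simp
    rw [← hC]
    ring
  -- local max of f at t0
  have hlm : IsLocalMax f t0 := by
    have hcont : ContinuousAt (fun t : ℝ => Function.update qstar b t) t0 := by
      apply continuousAt_pi.2
      intro i
      by_cases hib : i = b
      · subst hib; simp only [Function.update_self]; exact continuousAt_id
      · simp only [Function.update_of_ne hib]; exact continuousAt_const
    have hq : Function.update qstar b t0 = qstar := by
      rw [ht0]; exact Function.update_eq_self b qstar
    have h0 : IsLocalMax (mabeJ P) (Function.update qstar b t0) := by rw [hq]; exact hmax
    have h := h0.comp_continuous hcont
    have : (mabeJ P ∘ fun t => Function.update qstar b t) = f := funext hfe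
    rwa [this] at h
  -- derivative of f
  have hder : HasDerivAt f (P b - ((Real.exp t0 * t0 + Real.exp t0) * (S + Real.exp t0)
      - (A + Real.exp t0 * t0) * Real.exp t0) / (S + Real.exp t0) ^ 2) t0 := by
    have h1 : HasDerivAt (fun t : ℝ => C + P b * t) (P b) t0 := by
      simpa using ((hasDerivAt_id t0).const_mul (P b)).const_add C
    have h2 : HasDerivAt (fun t : ℝ => A + Real.exp t * t)
        (Real.exp t0 * t0 + Real.exp t0) t0 := by
      have := ((Real.hasDerivAt_exp t0).mul (hasDerivAt_id t0))
      simpa using this.const_add A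
    have h3 : HasDerivAt (fun t : ℝ => S + Real.exp t) (Real.exp t0) t0 :=
      (Real.hasDerivAt_exp t0).const_add S
    have h4 := h2.div h3 (hDpos t0).ne'
    exact h1.sub h4
  have hzero : P b - ((Real.exp t0 * t0 + Real.exp t0) * (S + Real.exp t0)
      - (A + Real.exp t0 * t0) * Real.exp t0) / (S + Real.exp t0) ^ 2 = 0 := by
    rw [← hder.deriv]; exact hlm.deriv_eq_zero
  -- algebra
  have hE : (∑ a, softmax qstar a * qstar a) = (A + Real.exp t0 * t0) / (S + Real.exp t0) := by
    have hD : ∑ j, Real.exp (qstar j) = S + Real.exp t0 := by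
      rw [hS, ← Finset.add_sum_erase _ _ (Finset.mem_univ b)]; ring
    simp only [softmax, hD]
    rw [← Finset.add_sum_erase _ (fun a => Real.exp (qstar a) / (S + Real.exp t0) * qstar a)
      (Finset.mem_univ b)]
    have h1 : ∑ j ∈ Finset.univ.erase b, Real.exp (qstar j) / (S + Real.exp t0) * qstar j
        = A / (S + Real.exp t0) := by
      rw [hA, Finset.sum_div]
      exact Finset.sum_congr rfl fun j _ => by ring
    rw [h1, ht0]
    have hne := (hDpos t0).ne'
    rw [ht0] at hne
    field_simp
    ring
  rw [hE]
  rw [hb] at hzero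
  have hne := (hDpos t0).ne'
  have hkey : (Real.exp t0 * t0 + Real.exp t0) * (S + Real.exp t0)
      = (A + Real.exp t0 * t0) * Real.exp t0 := by
    have h2 : (0:ℝ) < (S + Real.exp t0)^2 := by positivity
    field_simp at hzero
    linarith [hzero]
  have hexp := (Real.exp_pos t0).ne'
  have hA' : A = (1 + t0) * S + Real.exp t0 :=
    mul_right_cancel₀ hexp (by nlinarith [hkey])
  rw [hA']
  field_simp
  ring
end

section
/- Let d ≥ 1, let P : Fin d → ℝ be a probability vector, and let J(q) = Σ_i P i · q i − Σ_i σ(q) i · q i where σ(q) is the softmax of q. Suppose q* is a local maximum of J and there exists at least one index b₀ with P b₀ = 0. Then the maximum of q* over the support {a : P a > 0} exceeds the maximum of q* over the complement {b : P b = 0} by strictly more than 1, i.e. max_{a : P a > 0} q* a > (max_{b : P b = 0} q* b) + 1. -/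
private lemma sum_update_aux {d : ℕ} (q : Fin d → ℝ) (i : Fin d) (v : ℝ)
    (g : Fin d → ℝ → ℝ) :
    ∑ j, g j (Function.update q i v j)
      = g i v + ∑ j ∈ Finset.univ.erase i, g j (q j) := by
  rw [← Finset.add_sum_erase _ _ (Finset.mem_univ i)]
  congr 1
  · rw [Function.update_self]
  · apply Finset.sum_congr rfl
    intro j hj
    rw [Function.update_of_ne (Finset.ne_of_mem_erase hj)]

theorem mabe_local_max_margin {d : ℕ} (hd : 1 ≤ d) (P : Fin d → ℝ)
    (hP0 : ∀ i, 0 ≤ P i) (hP1 : ∑ i, P i = 1)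
    (qstar : Fin d → ℝ) (hmax : IsLocalMax (mabeJ P) qstar)
    (hsupp : (Finset.univ.filter fun a => 0 < P a).Nonempty)
    (hzero : (Finset.univ.filter fun b => P b = 0).Nonempty) :
    (Finset.univ.filter fun a => 0 < P a).sup' hsupp qstar
      > (Finset.univ.filter fun b => P b = 0).sup' hzero qstar + 1 := by
  set Z : ℝ := ∑ j, Real.exp (qstar j) with hZdef
  set T : ℝ := ∑ j, Real.exp (qstar j) * qstar j with hTdef
  have hZpos : 0 < Z := by
    obtain ⟨a, _⟩ := hsupp
    exact Finset.sum_pos (fun j _ => Real.exp_pos _) ⟨a, Finset.mem_univ a⟩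
  set S : ℝ := T / Z with hSdef
  -- gradient condition
  have grad : ∀ i, P i = Real.exp (qstar i) / Z * (qstar i + 1 - S) := by
    intro i
    set A : ℝ := ∑ j ∈ Finset.univ.erase i, Real.exp (qstar j) with hA
    set B : ℝ := ∑ j ∈ Finset.univ.erase i, Real.exp (qstar j) * qstar j with hB
    set CP : ℝ := ∑ j ∈ Finset.univ.erase i, P j * qstar j with hCP
    have hAnn : 0 ≤ A := Finset.sum_nonneg fun j _ => (Real.exp_pos _).le
    have hZA : Z = Real.exp (qstar i) + A := by
      rw [hZdef, ← Finset.add_sum_erase _ _ (Finset.mem_univ i)]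
    have hTB : T = Real.exp (qstar i) * qstar i + B := by
      rw [hTdef, ← Finset.add_sum_erase _ _ (Finset.mem_univ i)]
    set u : ℝ → (Fin d → ℝ) := fun t => Function.update qstar i (qstar i + t) with hu
    have hu0 : u 0 = qstar := by
      simp [hu, Function.update_eq_self]
    have hucont : ContinuousAt u 0 :=
      (continuous_const.update i (continuous_const.add continuous_id)).continuousAt
    have hloc : IsLocalMax (fun t => mabeJ P (u t)) 0 := by
      have := (hu0 ▸ hmax : IsMaxFilter (mabeJ P) (nhds (u 0)) (u 0)).comp_tendsto hucont
      exact this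
    -- explicit formula
    have heq : (fun t => mabeJ P (u t))
        = fun t => (P i * (qstar i + t) + CP)
            - (Real.exp (qstar i + t) * (qstar i + t) + B)
              / (Real.exp (qstar i + t) + A) := by
      funext t
      have h1 : ∑ j, P j * u t j = P i * (qstar i + t) + CP :=
        sum_update_aux qstar i (qstar i + t) (fun j x => P j * x)
      have h2 : ∑ j, Real.exp (u t j) = Real.exp (qstar i + t) + A :=
        sum_update_aux qstar i (qstar i + t) (fun j x => Real.exp x)
      have h3 : ∑ j, Real.exp (u t j) * u t j
          = Real.exp (qstar i + t) * (qstar i + t) + B :=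
        sum_update_aux qstar i (qstar i + t) (fun j x => Real.exp x * x)
      have h4 : ∑ j, softmax (u t) j * u t j
          = (∑ j, Real.exp (u t j) * u t j) / (∑ j, Real.exp (u t j)) := by
        rw [Finset.sum_div]
        apply Finset.sum_congr rfl
        intro j _
        rw [softmax, div_mul_eq_mul_div]
      rw [mabeJ, h1, h4, h2, h3]
    have hDpos : (0:ℝ) < Real.exp (qstar i + 0) + A :=
      lt_of_lt_of_le (Real.exp_pos _) (le_add_of_nonneg_right hAnn)
    -- derivatives
    have hlin : HasDerivAt (fun t : ℝ => qstar i + t) 1 0 := by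
      simpa using (hasDerivAt_id (0:ℝ)).const_add (qstar i)
    have hexp : HasDerivAt (fun t : ℝ => Real.exp (qstar i + t))
        (Real.exp (qstar i + 0) * 1) 0 := hlin.exp
    have hnum : HasDerivAt (fun t : ℝ => Real.exp (qstar i + t) * (qstar i + t) + B)
        (Real.exp (qstar i + 0) * 1 * (qstar i + 0) + Real.exp (qstar i + 0) * 1) 0 :=
      (hexp.mul hlin).add_const B
    have hden : HasDerivAt (fun t : ℝ => Real.exp (qstar i + t) + A)
        (Real.exp (qstar i + 0) * 1) 0 := hexp.add_const A
    have hfirst : HasDerivAt (fun t : ℝ => P i * (qstar i + t) + CP) (P i * 1) 0 :=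
      (hlin.const_mul (P i)).add_const CP
    have hder : HasDerivAt (fun t => mabeJ P (u t))
        (P i * 1 -
          ((Real.exp (qstar i + 0) * 1 * (qstar i + 0) + Real.exp (qstar i + 0) * 1)
              * (Real.exp (qstar i + 0) + A)
            - (Real.exp (qstar i + 0) * (qstar i + 0) + B) * (Real.exp (qstar i + 0) * 1))
            / (Real.exp (qstar i + 0) + A) ^ 2) 0 := by
      rw [heq]
      exact hfirst.sub (hnum.div hden hDpos.ne')
    have hz := hloc.hasDerivAt_eq_zero hder
    simp only [add_zero] at hz
    rw [← hZA, ← hTB] at hz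
    have hZne : Z ≠ 0 := hZpos.ne'
    have hgoal : Real.exp (qstar i) / Z * (qstar i + 1 - S)
        = ((Real.exp (qstar i) * 1 * qstar i + Real.exp (qstar i) * 1) * Z
            - T * (Real.exp (qstar i) * 1)) / Z ^ 2 := by
      rw [hSdef]
      field_simp
    rw [hgoal]
    linarith
  -- zero-set coordinates equal S - 1
  have hq0 : ∀ b, P b = 0 → qstar b = S - 1 := by
    intro b hb
    have h := grad b
    rw [hb] at h
    have hpos : 0 < Real.exp (qstar b) / Z := div_pos (Real.exp_pos _) hZpos
    have h2 : qstar b + 1 - S = 0 := by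
      rcases mul_eq_zero.mp h.symm with hc | hx
      · exact absurd hc hpos.ne'
      · exact hx
    linarith
  obtain ⟨b0, hb0mem⟩ := id hzero
  have hb0 : P b0 = 0 := (Finset.mem_filter.mp hb0mem).2
  -- sup over zero set is S - 1
  have hsupz : (Finset.univ.filter fun b => P b = 0).sup' hzero qstar = S - 1 := by
    apply le_antisymm
    · apply Finset.sup'_le
      intro b hb
      rw [hq0 b (Finset.mem_filter.mp hb).2]
    · calc S - 1 = qstar b0 := (hq0 b0 hb0).symm
        _ ≤ _ := Finset.le_sup' qstar hb0mem
  rw [hsupz]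
  by_contra hcon
  push_neg at hcon
  have hle : ∀ j, P j ≠ 0 → qstar j ≤ S := by
    intro j hj
    have hjmem : j ∈ Finset.univ.filter fun a => 0 < P a :=
      Finset.mem_filter.mpr ⟨Finset.mem_univ j, lt_of_le_of_ne (hP0 j) (Ne.symm hj)⟩
    calc qstar j ≤ _ := Finset.le_sup' qstar hjmem
      _ ≤ S - 1 + 1 := hcon
      _ = S := by ring
  have hTlt : T < Z * S := by
    rw [hZdef, Finset.sum_mul]
    apply Finset.sum_lt_sum
    · intro j _
      by_cases hj : P j = 0
      · have := hq0 j hj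
        nlinarith [Real.exp_pos (qstar j), this]
      · nlinarith [Real.exp_pos (qstar j), hle j hj]
    · refine ⟨b0, Finset.mem_univ b0, ?_⟩
      have := hq0 b0 hb0
      nlinarith [Real.exp_pos (qstar b0)]
  have hZS : Z * S = T := by
    rw [hSdef, mul_comm, div_mul_cancel₀ T hZpos.ne']
  linarith
end

section
/- Let d ≥ 1, let P : Fin d → ℝ be a probability vector, and let J(q) = Σ_i P i · q i − Σ_i σ(q) i · q i where σ(q) is the softmax of q. Suppose q* is a local maximum of J and there exists at least one index b₀ with P b₀ = 0. Then there exists an index a with P a > 0 whose utility strictly exceeds the softmax-weighted average: q* a > Σ_b σ(q*) b · q* b. -/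
set_option maxHeartbeats 1000000 in
theorem mabe_local_max_above_average {d : ℕ} (hd : 1 ≤ d) (P : Fin d → ℝ)
    (hP0 : ∀ i, 0 ≤ P i) (hP1 : ∑ i, P i = 1)
    (qstar : Fin d → ℝ) (hmax : IsLocalMax (mabeJ P) qstar)
    (hzero : ∃ b₀, P b₀ = 0) :
    ∃ a, 0 < P a ∧ qstar a > ∑ b, softmax qstar b * qstar b := by
  have hne : Nonempty (Fin d) := ⟨⟨0, hd⟩⟩
  set A := ∑ j, Real.exp (qstar j) with hA
  set B := ∑ j, Real.exp (qstar j) * qstar j with hB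
  have hApos : 0 < A :=
    Finset.sum_pos (fun i _ => Real.exp_pos _) Finset.univ_nonempty
  have havg : (∑ b, softmax qstar b * qstar b) = B / A := by
    simp only [softmax, div_mul_eq_mul_div, ← Finset.sum_div, hA, hB]
  -- the first-order condition at each coordinate
  have key : ∀ k, P k = Real.exp (qstar k) / A * (1 + qstar k - B / A) := by
    intro k
    set h : ℝ → (Fin d → ℝ) := fun t => Function.update qstar k (qstar k + t) with hh
    have hcont : ContinuousAt h 0 := by
      apply Continuous.continuousAt
      exact continuous_const.update k (continuous_const.add continuous_id)
    have h0 : h 0 = qstar := by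
      simp [hh]
    have hloc : IsLocalMax (mabeJ P ∘ h) 0 := by
      apply IsLocalMax.comp_continuous _ hcont
      rw [h0]; exact hmax
    have hsplit : ∀ (F : Fin d → ℝ → ℝ) (t : ℝ),
        (∑ i, F i (h t i)) = F k (qstar k + t) + ∑ i ∈ Finset.univ.erase k, F i (qstar i) := by
      intro F t
      rw [← Finset.add_sum_erase _ _ (Finset.mem_univ k)]
      congr 1
      · simp [hh]
      · refine Finset.sum_congr rfl fun i hi => ?_
        rw [hh]
        simp only
        rw [Function.update_of_ne (Finset.ne_of_mem_erase hi)]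
    set c1 : ℝ := ∑ i ∈ Finset.univ.erase k, P i * qstar i with hc1
    set S : ℝ → ℝ := fun t =>
      Real.exp (qstar k + t) + ∑ j ∈ Finset.univ.erase k, Real.exp (qstar j) with hS
    set N : ℝ → ℝ := fun t =>
      Real.exp (qstar k + t) * (qstar k + t)
        + ∑ j ∈ Finset.univ.erase k, Real.exp (qstar j) * qstar j with hN
    have hS0 : S 0 = A := by
      rw [hS]; simp only [add_zero]
      rw [hA, ← Finset.add_sum_erase _ _ (Finset.mem_univ k)]
    have hN0 : N 0 = B := by
      rw [hN]; simp only [add_zero]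
      rw [hB, ← Finset.add_sum_erase _ _ (Finset.mem_univ k)]
    have hgexp : (mabeJ P ∘ h) = fun t => (P k * (qstar k + t) + c1) - N t / S t := by
      funext t
      simp only [Function.comp_apply, mabeJ]
      congr 1
      · exact hsplit (fun i x => P i * x) t
      · have hden : (∑ j, Real.exp (h t j)) = S t := hsplit (fun _ x => Real.exp x) t
        have hnum : (∑ i, Real.exp (h t i) * h t i) = N t :=
          hsplit (fun _ x => Real.exp x * x) t
        rw [← hden, ← hnum]
        simp only [softmax, div_mul_eq_mul_div, ← Finset.sum_div]
    -- derivative computation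
    have hSd : HasDerivAt S (Real.exp (qstar k)) 0 := by
      have : HasDerivAt (fun t => Real.exp (qstar k + t)) (Real.exp (qstar k + 0) * 1) 0 :=
        (((hasDerivAt_id 0).const_add (qstar k)).exp)
      simpa [hS] using this.add_const (∑ j ∈ Finset.univ.erase k, Real.exp (qstar j))
    have hlin : HasDerivAt (fun t : ℝ => qstar k + t) 1 0 :=
      (hasDerivAt_id 0).const_add (qstar k)
    have hNd : HasDerivAt N (Real.exp (qstar k) * (qstar k) + Real.exp (qstar k)) 0 := by
      have he : HasDerivAt (fun t => Real.exp (qstar k + t)) (Real.exp (qstar k)) 0 := by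
        simpa using ((hasDerivAt_id 0).const_add (qstar k)).exp
      have := (he.mul hlin).add_const (∑ j ∈ Finset.univ.erase k, Real.exp (qstar j) * qstar j)
      simpa [hN, mul_comm] using this
    have hS0ne : S 0 ≠ 0 := by rw [hS0]; exact hApos.ne'
    have hquot : HasDerivAt (fun t => N t / S t)
        (((Real.exp (qstar k) * qstar k + Real.exp (qstar k)) * A - B * Real.exp (qstar k)) / A ^ 2)
        0 := by
      have := hNd.div hSd hS0ne
      rwa [hS0, hN0] at this
    have hfirst : HasDerivAt (fun t => P k * (qstar k + t) + c1) (P k) 0 := by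
      simpa using (hlin.const_mul (P k)).add_const c1
    have hg : HasDerivAt (mabeJ P ∘ h)
        (P k - ((Real.exp (qstar k) * qstar k + Real.exp (qstar k)) * A - B * Real.exp (qstar k)) / A ^ 2)
        0 := by
      rw [hgexp]
      exact hfirst.sub hquot
    have hz : deriv (mabeJ P ∘ h) 0 = 0 := hloc.deriv_eq_zero
    have := hg.deriv
    rw [hz] at this
    have hPk : P k = ((Real.exp (qstar k) * qstar k + Real.exp (qstar k)) * A - B * Real.exp (qstar k)) / A ^ 2 := by
      linarith
    rw [hPk]
    field_simp
    ring
  -- now the combinatorial part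
  obtain ⟨b₀, hb0⟩ := hzero
  have hsig : ∀ i, 0 < Real.exp (qstar i) / A := fun i => div_pos (Real.exp_pos _) hApos
  have hzero' : ∀ i, P i = 0 → qstar i = B / A - 1 := by
    intro i hi
    have := key i
    rw [hi] at this
    have h2 : (1 + qstar i - B / A) = 0 :=
      (mul_eq_zero.mp this.symm).resolve_left (hsig i).ne'
    linarith
  have hsum0 : (∑ i, Real.exp (qstar i) / A * (qstar i - B / A)) = 0 := by
    have : (∑ i, Real.exp (qstar i) / A * (qstar i - B / A))
        = (∑ i, Real.exp (qstar i) * qstar i) / A - (∑ i, Real.exp (qstar i)) * (B / A) / A := by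
      simp only [div_mul_eq_mul_div, mul_sub, Finset.sum_sub_distrib, ← Finset.sum_div,
        Finset.sum_mul]
    rw [this, ← hA, ← hB, mul_div_cancel_left₀ _ hApos.ne', sub_self]
  by_contra hcon
  push_neg at hcon
  rw [havg] at hcon
  have hle : ∀ i ∈ Finset.univ, Real.exp (qstar i) / A * (qstar i - B / A) ≤ (0 : ℝ) := by
    intro i _
    rcases (hP0 i).lt_or_eq with hpos | hzeroi
    · have := hcon i hpos
      exact mul_nonpos_of_nonneg_of_nonpos (hsig i).le (by linarith)
    · have := hzero' i hzeroi.symm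
      apply mul_nonpos_of_nonneg_of_nonpos (hsig i).le
      rw [this]; linarith
  have hstrict : Real.exp (qstar b₀) / A * (qstar b₀ - B / A) < 0 := by
    have hq := hzero' b₀ hb0
    have h1 : qstar b₀ - B / A = -1 := by rw [hq]; ring
    rw [h1]
    have := hsig b₀
    linarith
  have : (∑ i, Real.exp (qstar i) / A * (qstar i - B / A)) < ∑ _i : Fin d, (0 : ℝ) :=
    Finset.sum_lt_sum hle ⟨b₀, Finset.mem_univ _, by simpa using hstrict⟩
  simp only [Finset.sum_const, smul_zero] at this
  rw [hsum0] at this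
  exact lt_irrefl _ this
end

section
/- Let d ≥ 1, let P : Fin d → ℝ be a probability vector, and let J(q) = Σ_i P i · q i − Σ_i σ(q) i · q i where σ(q) is the softmax of q. If an index b satisfies P b = 0 and q b < (Σ_a σ(q) a · q a) − 1, then the partial derivative of J with respect to the b-th coordinate at q is strictly positive. (Consequently J cannot attain a local maximum, even as a limit, by sending q b to −∞.) -/
theorem mabe_partial_deriv_pos_below {d : ℕ} (hd : 1 ≤ d) (P : Fin d → ℝ)
    (hP0 : ∀ i, 0 ≤ P i) (hP1 : ∑ i, P i = 1)
    (q : Fin d → ℝ) (b : Fin d) (hPb : P b = 0)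
    (hqb : q b < (∑ a, softmax q a * q a) - 1) :
    0 < deriv (fun t : ℝ => mabeJ P (Function.update q b t)) (q b) := by
  classical
  set C : ℝ := ∑ j ∈ Finset.univ.erase b, Real.exp (q j) with hC
  set A : ℝ := ∑ j ∈ Finset.univ.erase b, Real.exp (q j) * q j with hA
  set K : ℝ := ∑ i ∈ Finset.univ.erase b, P i * q i with hK
  have hCnn : 0 ≤ C := Finset.sum_nonneg fun j _ => (Real.exp_pos _).le
  have hSum : ∀ t : ℝ, ∀ f : ℝ → ℝ,
      (∑ i, f (Function.update q b t i)) =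
        (∑ i ∈ Finset.univ.erase b, f (q i)) + f t := by
    intro t f
    rw [← Finset.sum_erase_add _ _ (Finset.mem_univ b)]
    congr 1
    · exact Finset.sum_congr rfl fun i hi => by
        rw [Function.update_of_ne (Finset.ne_of_mem_erase hi)]
    · rw [Function.update_self]
  have hfun : ∀ t : ℝ, mabeJ P (Function.update q b t)
      = K - (A + t * Real.exp t) / (C + Real.exp t) := by
    intro t
    have hS : (∑ j, Real.exp (Function.update q b t j)) = C + Real.exp t :=
      hSum t Real.exp
    unfold mabeJ softmax
    rw [hS]
    congr 1
    · have := hSum t (fun x => P b * x)  -- dummy, not used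
      rw [← Finset.sum_erase_add _ _ (Finset.mem_univ b)]
      have : ∀ i ∈ Finset.univ.erase b,
          P i * Function.update q b t i = P i * q i := fun i hi => by
        rw [Function.update_of_ne (Finset.ne_of_mem_erase hi)]
      rw [Finset.sum_congr rfl this, Function.update_self, hPb]
      ring
    · have : (∑ i, Real.exp (Function.update q b t i) / (C + Real.exp t) *
          Function.update q b t i)
          = (∑ i, Real.exp (Function.update q b t i) * Function.update q b t i)
            / (C + Real.exp t) := by
        rw [Finset.sum_div]
        exact Finset.sum_congr rfl fun i _ => by ring
      rw [this, hSum t (fun x => Real.exp x * x)]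
      ring_nf
      rw [hA]; ring
  set t := q b with ht
  have hSpos : 0 < C + Real.exp t := by positivity
  -- derivative
  have hnum : HasDerivAt (fun t : ℝ => A + t * Real.exp t)
      (Real.exp t + t * Real.exp t) t := by
    have := ((hasDerivAt_id t).mul (Real.hasDerivAt_exp t)).const_add A
    simpa using this
  have hden : HasDerivAt (fun t : ℝ => C + Real.exp t) (Real.exp t) t :=
    (Real.hasDerivAt_exp t).const_add C
  have hdiv := hnum.div hden hSpos.ne'
  have hg : HasDerivAt (fun t : ℝ => mabeJ P (Function.update q b t))
      (0 - ((Real.exp t + t * Real.exp t) * (C + Real.exp t)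
        - (A + t * Real.exp t) * Real.exp t) / (C + Real.exp t) ^ 2) t := by
    have := (hasDerivAt_const t K).sub hdiv
    simpa [hfun, sub_div, Pi.sub_def, Pi.div_def] using this.congr_deriv (by ring)
  rw [hg.deriv]
  -- the hypothesis rewritten
  have hqb' : t + 1 < (A + t * Real.exp t) / (C + Real.exp t) := by
    have hσ : (∑ a, softmax q a * q a)
        = (A + t * Real.exp t) / (C + Real.exp t) := by
      have := hfun t
      rw [show Function.update q b t = q from Function.update_eq_self b q] at this
      have h2 : mabeJ P q = K - ∑ i, softmax q i * q i := by
        unfold mabeJ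
        congr 1
        rw [← Finset.sum_erase_add _ _ (Finset.mem_univ b), hPb]
        simp [hK]
      rw [h2] at this
      linarith
    rw [← hσ]; linarith
  rw [lt_div_iff₀ hSpos] at hqb'
  have hkey : (Real.exp t + t * Real.exp t) * (C + Real.exp t)
      - (A + t * Real.exp t) * Real.exp t < 0 := by
    have h1 : (t + 1) * C + Real.exp t < A := by nlinarith
    have he := Real.exp_pos t
    nlinarith
  have : ((Real.exp t + t * Real.exp t) * (C + Real.exp t)
      - (A + t * Real.exp t) * Real.exp t) / (C + Real.exp t) ^ 2 < 0 :=
    div_neg_of_neg_of_pos hkey (by positivity)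
  linarith
end

section
/- Let n, d ≥ 1, let Q : (Fin n → ℝ) → (Fin d → ℝ) be such that each component function w ↦ Q(w) a is differentiable at a point w, and let y ∈ Fin d. Define the single-step MABE objective J_MABE(w) = Q(w) y − Σ_a σ(Q(w)) a · Q(w) a, and define cov_j(w) = Σ_a σ(Q(w)) a · (Q(w) a − Σ_b σ(Q(w)) b · Q(w) b) · (∂_j Q(w) a − Σ_b σ(Q(w)) b · ∂_j Q(w) b). Then for every coordinate j, ∂_j (log σ(Q(·)) y)(w) = ∂_j J_MABE(w) + cov_j(w). -/
/-- Partial derivative of `g : (Fin n → ℝ) → ℝ` in the `j`-th coordinate at `w`. -/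
noncomputable def pderiv {n : ℕ} (j : Fin n) (g : (Fin n → ℝ) → ℝ) (w : Fin n → ℝ) : ℝ :=
  deriv (fun t => g (Function.update w j t)) (w j)

theorem log_softmax_deriv_eq_mabe_deriv_add_cov {n d : ℕ} (hn : 1 ≤ n) (hd : 1 ≤ d)
    (Q : (Fin n → ℝ) → (Fin d → ℝ)) (w : Fin n → ℝ)
    (hQ : ∀ a, DifferentiableAt ℝ (fun w' => Q w' a) w)
    (y : Fin d) (j : Fin n) :
    pderiv j (fun w' => Real.log (softmax (Q w') y)) w
      = pderiv j (fun w' => Q w' y - ∑ a, softmax (Q w') a * Q w' a) w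
        + ∑ a, softmax (Q w) a
            * (Q w a - ∑ b, softmax (Q w) b * Q w b)
            * (pderiv j (fun w' => Q w' a) w
                - ∑ b, softmax (Q w) b * pderiv j (fun w' => Q w' b) w) := by
  classical
  haveI : Nonempty (Fin d) := ⟨⟨0, hd⟩⟩
  set t0 : ℝ := w j with ht0
  have hupd : Function.update w j t0 = w := Function.update_eq_self j w
  set f : Fin d → ℝ → ℝ := fun a t => Q (Function.update w j t) a with hf
  -- differentiability of the update path
  have hu : DifferentiableAt ℝ (fun t : ℝ => Function.update w j t) t0 := by
    rw [differentiableAt_pi]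
    intro i
    by_cases h : i = j
    · subst h
      simp only [Function.update_self]
      exact differentiableAt_fun_id
    · simp only [Function.update_of_ne h]
      exact differentiableAt_const _
  have hfd : ∀ a, DifferentiableAt ℝ (f a) t0 := by
    intro a
    have := DifferentiableAt.comp t0 (by rw [hupd]; exact hQ a) hu
    exact this
  set D : Fin d → ℝ := fun a => pderiv j (fun w' => Q w' a) w with hD
  have hline : ∀ a, HasDerivAt (f a) (D a) t0 := by
    intro a
    have : D a = deriv (f a) t0 := rfl
    rw [this]
    exact (hfd a).hasDerivAt
  set S : ℝ → ℝ := fun t => ∑ b, Real.exp (f b t) with hSdef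
  set S' : ℝ := ∑ b, Real.exp (f b t0) * D b with hS'def
  have hS : HasDerivAt S S' t0 := HasDerivAt.fun_sum fun b _ => (hline b).exp
  have hS0 : 0 < S t0 :=
    Finset.sum_pos (fun b _ => Real.exp_pos _) Finset.univ_nonempty
  have hSt : ∀ t, 0 < S t := fun t =>
    Finset.sum_pos (fun b _ => Real.exp_pos _) Finset.univ_nonempty
  set p : Fin d → ℝ := fun a => Real.exp (f a t0) / S t0 with hpdef
  have hp : ∀ a, softmax (Q w) a = p a := by
    intro a
    simp only [softmax, hpdef, hSdef, hf, hupd]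
  set r : ℝ := S' / S t0 with hrdef
  -- derivative of log softmax
  have hLHS : pderiv j (fun w' => Real.log (softmax (Q w') y)) w = D y - r := by
    have heq : (fun t => Real.log (softmax (Q (Function.update w j t)) y))
        = fun t => f y t - Real.log (S t) := by
      funext t
      have : softmax (Q (Function.update w j t)) y = Real.exp (f y t) / S t := rfl
      rw [this, Real.log_div (Real.exp_ne_zero _) (hSt t).ne', Real.log_exp]
    have hder : HasDerivAt (fun t => f y t - Real.log (S t)) (D y - S' / S t0) t0 :=
      (hline y).sub (hS.log hS0.ne')
    show deriv (fun t => Real.log (softmax (Q (Function.update w j t)) y)) t0 = D y - r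
    rw [heq, hder.deriv, hrdef]
  -- derivative of each softmax component
  set g : Fin d → ℝ → ℝ := fun a t => Real.exp (f a t) / S t with hgdef
  have hg : ∀ a, HasDerivAt (g a) (p a * (D a - r)) t0 := by
    intro a
    have h1 : HasDerivAt (g a)
        ((Real.exp (f a t0) * D a * S t0 - Real.exp (f a t0) * S') / S t0 ^ 2) t0 :=
      ((hline a).exp).div hS hS0.ne'
    have h2 : (Real.exp (f a t0) * D a * S t0 - Real.exp (f a t0) * S') / S t0 ^ 2
        = p a * (D a - r) := by
      rw [hpdef, hrdef]
      field_simp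
    rwa [h2] at h1
  -- derivative of the MABE objective
  have hRHS : pderiv j (fun w' => Q w' y - ∑ a, softmax (Q w') a * Q w' a) w
      = D y - ∑ a, (p a * (D a - r) * f a t0 + p a * D a) := by
    have heq : (fun t => Q (Function.update w j t) y
          - ∑ a, softmax (Q (Function.update w j t)) a * Q (Function.update w j t) a)
        = fun t => f y t - ∑ a, g a t * f a t := rfl
    have hder : HasDerivAt (fun t => f y t - ∑ a, g a t * f a t)
        (D y - ∑ a, (p a * (D a - r) * f a t0 + p a * D a)) t0 := by
      refine (hline y).sub (HasDerivAt.fun_sum fun a _ => ?_)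
      have := (hg a).mul (hline a)
      have hga : g a t0 = p a := rfl
      rwa [hga] at this
    show deriv (fun t => Q (Function.update w j t) y
          - ∑ a, softmax (Q (Function.update w j t)) a * Q (Function.update w j t) a) t0
        = _
    rw [heq, hder.deriv]
  -- basic facts about p
  have hpsum : ∑ a, p a = 1 := by
    rw [hpdef, ← Finset.sum_div]
    exact div_self hS0.ne'
  have hpD : ∑ a, p a * D a = r := by
    rw [hpdef, hrdef, hS'def]
    simp only [div_mul_eq_mul_div]
    rw [← Finset.sum_div]
  have hfw : ∀ a, f a t0 = Q w a := fun a => by rw [hf]; simp [hupd]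
  rw [hLHS, hRHS]
  simp only [hp, hfw]
  rw [hpD]
  -- algebraic identity
  have key : ∑ a, (p a * (D a - r) * Q w a + p a * D a)
      = r + ∑ a, p a * (Q w a - ∑ b, p b * Q w b) * (D a - r) := by
    set qb : ℝ := ∑ b, p b * Q w b with hqb
    have e1 : ∀ a ∈ Finset.univ, p a * (D a - r) * Q w a + p a * D a
        - p a * (Q w a - qb) * (D a - r)
        = p a * D a + qb * (p a * D a) - qb * (r * p a) := fun a _ => by ring
    have : ∑ a, (p a * (D a - r) * Q w a + p a * D a)
        - ∑ a, p a * (Q w a - qb) * (D a - r) = r := by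
      rw [← Finset.sum_sub_distrib, Finset.sum_congr rfl e1]
      simp only [Finset.sum_sub_distrib, Finset.sum_add_distrib, ← Finset.mul_sum]
      rw [hpD, hpsum]
      ring
    linarith [this]
  rw [key]
  ring
end

section
/- (Proposition 1.) Let n ≥ 1, let T ≥ 1, and for each step t ∈ Fin T let Q_t : (Fin n → ℝ) → (Fin d → ℝ) be such that every component w ↦ Q_t(w) a is differentiable at a point w, and let y_t ∈ Fin d be the expected token at step t. Define the log-likelihood L(w) = Σ_{t} log(σ(Q_t(w)) y_t), the MABE objective J_MABE(w) = Σ_{t} ( Q_t(w) y_t − Σ_a σ(Q_t(w)) a · Q_t(w) a ), and for each coordinate j the covariance cov_{t,j}(w) = Σ_a σ(Q_t(w)) a · (Q_t(w) a − Σ_b σ(Q_t(w)) b · Q_t(w) b) · (∂_j Q_t(w) a − Σ_b σ(Q_t(w)) b · ∂_j Q_t(w) b). Then for every coordinate j, ∂_j L(w) = ∂_j J_MABE(w) + Σ_{t} cov_{t,j}(w). -/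
lemma mabe_one_step {n d : ℕ} (Q : (Fin n → ℝ) → Fin d → ℝ) (w : Fin n → ℝ) (j : Fin n)
    (hQ : ∀ a, DifferentiableAt ℝ (fun w' => Q w' a) w) (yt : Fin d) :
    HasDerivAt (fun s => Real.log (softmax (Q (Function.update w j s)) yt))
      (pderiv j (fun w' => Q w' yt) w
        - ∑ b, softmax (Q w) b * pderiv j (fun w' => Q w' b) w) (w j)
    ∧ HasDerivAt (fun s => Q (Function.update w j s) yt
        - ∑ a, softmax (Q (Function.update w j s)) a * Q (Function.update w j s) a)
      ((pderiv j (fun w' => Q w' yt) w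
        - ∑ b, softmax (Q w) b * pderiv j (fun w' => Q w' b) w)
        - ∑ a, softmax (Q w) a * (Q w a - ∑ b, softmax (Q w) b * Q w b)
            * (pderiv j (fun w' => Q w' a) w
               - ∑ b, softmax (Q w) b * pderiv j (fun w' => Q w' b) w)) (w j) := by
  classical
  have : Nonempty (Fin d) := ⟨yt⟩
  have hww : Function.update w j (w j) = w := Function.update_eq_self j w
  -- differentiability of the update map
  have hu : DifferentiableAt ℝ (fun s : ℝ => Function.update w j s) (w j) := by
    rw [differentiableAt_pi]
    intro i
    simp only [Function.update_apply]
    by_cases h : i = j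
    · simpa [h] using differentiableAt_id'
    · simpa [h] using differentiableAt_const (w i)
  have hg : ∀ a, DifferentiableAt ℝ (fun s => Q (Function.update w j s) a) (w j) := by
    intro a
    have h := hQ a
    rw [← hww] at h
    exact DifferentiableAt.comp _ h hu
  have hderiv : ∀ a, HasDerivAt (fun s => Q (Function.update w j s) a)
      (pderiv j (fun w' => Q w' a) w) (w j) := fun a => (hg a).hasDerivAt
  set G' : Fin d → ℝ := fun a => pderiv j (fun w' => Q w' a) w with hG'
  -- derivative of the partition function
  have hZ : HasDerivAt (fun s => ∑ b, Real.exp (Q (Function.update w j s) b))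
      (∑ b, Real.exp (Q w b) * G' b) (w j) := by
    apply HasDerivAt.fun_sum
    intro b _
    have h := (hderiv b).exp
    simpa only [hww] using h
  have hZpos : ∀ s, 0 < ∑ b, Real.exp (Q (Function.update w j s) b) := fun s =>
    Finset.sum_pos (fun b _ => Real.exp_pos _) Finset.univ_nonempty
  have hZvpos : 0 < ∑ b, Real.exp (Q w b) := by
    have := hZpos (w j); rwa [hww] at this
  have hZvne : (∑ b, Real.exp (Q w b)) ≠ 0 := ne_of_gt hZvpos
  have hμ' : (∑ b, Real.exp (Q w b) * G' b) / (∑ b, Real.exp (Q w b))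
      = ∑ b, softmax (Q w) b * G' b := by
    rw [Finset.sum_div]
    refine Finset.sum_congr rfl fun b _ => ?_
    unfold softmax; ring
  have hσ1 : ∑ a, softmax (Q w) a = 1 := by
    unfold softmax
    rw [← Finset.sum_div]
    exact div_self hZvne
  constructor
  · -- log-likelihood part
    have hfun : (fun s => Real.log (softmax (Q (Function.update w j s)) yt))
        = fun s => Q (Function.update w j s) yt
            - Real.log (∑ b, Real.exp (Q (Function.update w j s) b)) := by
      funext s
      unfold softmax
      rw [Real.log_div (Real.exp_ne_zero _) (ne_of_gt (hZpos s)), Real.log_exp]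
    rw [hfun]
    have hlog := hZ.log (by rw [hww]; exact hZvne)
    have h := (hderiv yt).sub hlog
    rw [hww] at h
    rwa [hμ'] at h
  · -- MABE part
    have hσ : ∀ a, HasDerivAt (fun s => softmax (Q (Function.update w j s)) a)
        (softmax (Q w) a * (G' a - ∑ b, softmax (Q w) b * G' b)) (w j) := by
      intro a
      have h := HasDerivAt.div ((hderiv a).exp) hZ (ne_of_gt (hZpos (w j)))
      simp only [hww] at h
      have heq : (Real.exp (Q w a) * G' a * (∑ b, Real.exp (Q w b))
            - Real.exp (Q w a) * ∑ b, Real.exp (Q w b) * G' b)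
            / (∑ b, Real.exp (Q w b)) ^ 2
          = softmax (Q w) a * (G' a - ∑ b, softmax (Q w) b * G' b) := by
        rw [← hμ']
        unfold softmax
        field_simp
      rw [heq] at h
      exact h
    have hprod : ∀ a, HasDerivAt
        (fun s => softmax (Q (Function.update w j s)) a * Q (Function.update w j s) a)
        (softmax (Q w) a * (G' a - ∑ b, softmax (Q w) b * G' b) * Q w a
          + softmax (Q w) a * G' a) (w j) := by
      intro a
      have h := (hσ a).fun_mul (hderiv a)
      simpa only [hww] using h
    have hsum : HasDerivAt
        (fun s => ∑ a, softmax (Q (Function.update w j s)) a * Q (Function.update w j s) a)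
        (∑ a, (softmax (Q w) a * (G' a - ∑ b, softmax (Q w) b * G' b) * Q w a
          + softmax (Q w) a * G' a)) (w j) := HasDerivAt.fun_sum fun a _ => hprod a
    have hB := (hderiv yt).sub hsum
    -- algebraic identity for the derivative value
    have h0 : ∑ a, softmax (Q w) a * (G' a - ∑ b, softmax (Q w) b * G' b) = 0 := by
      have h1 : ∑ a, softmax (Q w) a * (G' a - ∑ b, softmax (Q w) b * G' b)
          = (∑ a, softmax (Q w) a * G' a)
            - (∑ a, softmax (Q w) a) * (∑ b, softmax (Q w) b * G' b) := by
        simp only [mul_sub]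
        rw [Finset.sum_sub_distrib, ← Finset.sum_mul]
      rw [h1, hσ1]
      ring
    have key : ∑ a, (softmax (Q w) a * (G' a - ∑ b, softmax (Q w) b * G' b) * Q w a
          + softmax (Q w) a * G' a)
        = (∑ b, softmax (Q w) b * G' b)
          + ∑ a, softmax (Q w) a * (Q w a - ∑ b, softmax (Q w) b * Q w b)
              * (G' a - ∑ b, softmax (Q w) b * G' b) := by
      have h1 : ∀ a : Fin d, softmax (Q w) a * (Q w a - ∑ b, softmax (Q w) b * Q w b)
            * (G' a - ∑ b, softmax (Q w) b * G' b)
          = softmax (Q w) a * (G' a - ∑ b, softmax (Q w) b * G' b) * Q w a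
            - (∑ b, softmax (Q w) b * Q w b)
              * (softmax (Q w) a * (G' a - ∑ b, softmax (Q w) b * G' b)) := fun a => by ring
      have h2 : ∑ a, softmax (Q w) a * (Q w a - ∑ b, softmax (Q w) b * Q w b)
            * (G' a - ∑ b, softmax (Q w) b * G' b)
          = ∑ a, softmax (Q w) a * (G' a - ∑ b, softmax (Q w) b * G' b) * Q w a := by
        simp only [h1]
        rw [Finset.sum_sub_distrib, ← Finset.mul_sum, h0, mul_zero, sub_zero]
      rw [h2, Finset.sum_add_distrib]
      ring
    rw [key] at hB
    have hval : G' yt - ((∑ b, softmax (Q w) b * G' b)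
          + ∑ a, softmax (Q w) a * (Q w a - ∑ b, softmax (Q w) b * Q w b)
              * (G' a - ∑ b, softmax (Q w) b * G' b))
        = (G' yt - ∑ b, softmax (Q w) b * G' b)
          - ∑ a, softmax (Q w) a * (Q w a - ∑ b, softmax (Q w) b * Q w b)
              * (G' a - ∑ b, softmax (Q w) b * G' b) := by ring
    rwa [hval] at hB

/-- Proposition 1: the gradient of the autoregressive log-likelihood equals the
gradient of the MABE objective plus the cumulative covariance term. -/
theorem log_likelihood_deriv_eq_mabe_deriv_add_cov {n d T : ℕ}
    (hn : 1 ≤ n) (hT : 1 ≤ T)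
    (Q : Fin T → (Fin n → ℝ) → (Fin d → ℝ)) (w : Fin n → ℝ)
    (hQ : ∀ t a, DifferentiableAt ℝ (fun w' => Q t w' a) w)
    (y : Fin T → Fin d) (j : Fin n) :
    pderiv j (fun w' => ∑ t, Real.log (softmax (Q t w') (y t))) w
      = pderiv j (fun w' => ∑ t, (Q t w' (y t) - ∑ a, softmax (Q t w') a * Q t w' a)) w
        + ∑ t, ∑ a, softmax (Q t w) a
            * (Q t w a - ∑ b, softmax (Q t w) b * Q t w b)
            * (pderiv j (fun w' => Q t w' a) w
                - ∑ b, softmax (Q t w) b * pderiv j (fun w' => Q t w' b) w) := by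
  classical
  have h := fun t => mabe_one_step (Q t) w j (hQ t) (y t)
  have hA : HasDerivAt (fun s => ∑ t, Real.log (softmax (Q t (Function.update w j s)) (y t)))
      (∑ t, (pderiv j (fun w' => Q t w' (y t)) w
        - ∑ b, softmax (Q t w) b * pderiv j (fun w' => Q t w' b) w)) (w j) :=
    HasDerivAt.fun_sum fun t _ => (h t).1
  have hB : HasDerivAt (fun s => ∑ t, (Q t (Function.update w j s) (y t)
        - ∑ a, softmax (Q t (Function.update w j s)) a * Q t (Function.update w j s) a))
      (∑ t, ((pderiv j (fun w' => Q t w' (y t)) w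
        - ∑ b, softmax (Q t w) b * pderiv j (fun w' => Q t w' b) w)
        - ∑ a, softmax (Q t w) a * (Q t w a - ∑ b, softmax (Q t w) b * Q t w b)
            * (pderiv j (fun w' => Q t w' a) w
               - ∑ b, softmax (Q t w) b * pderiv j (fun w' => Q t w' b) w))) (w j) :=
    HasDerivAt.fun_sum fun t _ => (h t).2
  show deriv _ (w j) = deriv _ (w j) + _
  rw [show (fun s => (fun w' => ∑ t, Real.log (softmax (Q t w') (y t)))
        (Function.update w j s))
      = fun s => ∑ t, Real.log (softmax (Q t (Function.update w j s)) (y t)) from rfl]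
  rw [show (fun s => (fun w' => ∑ t, (Q t w' (y t) - ∑ a, softmax (Q t w') a * Q t w' a))
        (Function.update w j s))
      = fun s => ∑ t, (Q t (Function.update w j s) (y t)
          - ∑ a, softmax (Q t (Function.update w j s)) a * Q t (Function.update w j s) a)
      from rfl]
  rw [hA.deriv, hB.deriv, ← Finset.sum_add_distrib]
  refine Finset.sum_congr rfl fun t _ => ?_
  ring
end

section
/- (Dual probabilities form a probability distribution at the optimum.) Let d ≥ 1, let P : Fin d → ℝ be a probability vector, and let J(q) = Σ_i P i · q i − Σ_i σ(q) i · q i, where σ(q) is the softmax of q. If q* is a local maximum of J, then the dual probabilities p^dual a = σ(q*) a · (1 + q* a − Σ_b σ(q*) b · q* b) satisfy 0 ≤ p^dual a ≤ 1 for all a and Σ_a p^dual a = 1; in particular no clipping or renormalization is needed at an exact optimum. -/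
lemma dual_eq_P {d : ℕ} (hd : 1 ≤ d) (P : Fin d → ℝ)
    (qstar : Fin d → ℝ) (hmax : IsLocalMax (mabeJ P) qstar) (a : Fin d) :
    softmax qstar a * (1 + qstar a - ∑ b, softmax qstar b * qstar b) = P a := by
  have : Nonempty (Fin d) := ⟨⟨0, hd⟩⟩
  set D := ∑ j, Real.exp (qstar j) with hDdef
  have hDpos : 0 < D := Finset.sum_pos (fun j _ => Real.exp_pos _) Finset.univ_nonempty
  set N := ∑ i, Real.exp (qstar i) * qstar i with hNdef
  -- perturbation
  set qt : ℝ → Fin d → ℝ := fun t i => qstar i + if i = a then t else 0 with hqt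
  have hqt0 : qt 0 = qstar := by funext i; simp [hqt]
  -- local max of g at 0
  have htend : Filter.Tendsto qt (nhds 0) (nhds qstar) := by
    have hc : Continuous qt := by
      apply continuous_pi
      intro i
      by_cases h : i = a <;> simp [hqt, h] <;> fun_prop
    simpa [hqt0] using hc.tendsto 0
  have hg : IsLocalMax (fun t => mabeJ P (qt t)) 0 := by
    have hmax' : IsMaxFilter (mabeJ P) (nhds qstar) (qt 0) := hqt0 ▸ hmax
    exact hmax'.comp_tendsto htend
  -- derivatives
  have hbase : HasDerivAt (fun t : ℝ => qstar a + t) 1 0 :=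
    (hasDerivAt_id 0).const_add (qstar a)
  have hA : HasDerivAt (fun t => ∑ i, P i * qt t i) (P a) 0 := by
    have h1 : HasDerivAt (fun t => ∑ i, P i * qt t i)
        (∑ i : Fin d, if i = a then P a else 0) 0 := by
      apply HasDerivAt.fun_sum
      intro i _
      by_cases h : i = a
      · subst h
        simpa [hqt] using hbase.const_mul (P i)
      · simpa [hqt, h] using hasDerivAt_const (0:ℝ) (P i * qstar i)
    simpa using h1
  have hN : HasDerivAt (fun t => ∑ i, Real.exp (qt t i) * qt t i)
      (Real.exp (qstar a) * (qstar a + 1)) 0 := by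
    have h1 : HasDerivAt (fun t => ∑ i, Real.exp (qt t i) * qt t i)
        (∑ i : Fin d, if i = a then Real.exp (qstar a) * (qstar a + 1) else 0) 0 := by
      apply HasDerivAt.fun_sum
      intro i _
      by_cases h : i = a
      · subst h
        have h3 := (hbase.exp).fun_mul hbase
        simp only [add_zero, mul_one] at h3
        have h2 : HasDerivAt (fun t => Real.exp (qstar i + t) * (qstar i + t))
            (Real.exp (qstar i) * (qstar i + 1)) 0 := by
          exact h3.congr_deriv (by ring)
        simpa [hqt] using h2
      · simpa [hqt, h] using hasDerivAt_const (0:ℝ) (Real.exp (qstar i) * qstar i)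
    simpa using h1
  have hD : HasDerivAt (fun t => ∑ j, Real.exp (qt t j)) (Real.exp (qstar a)) 0 := by
    have h1 : HasDerivAt (fun t => ∑ j, Real.exp (qt t j))
        (∑ j : Fin d, if j = a then Real.exp (qstar a) else 0) 0 := by
      apply HasDerivAt.fun_sum
      intro j _
      by_cases h : j = a
      · subst h
        simpa [hqt] using hbase.exp
      · simpa [hqt, h] using hasDerivAt_const (0:ℝ) (Real.exp (qstar j))
    simpa using h1
  have hDne : (∑ j, Real.exp (qt 0 j)) ≠ 0 := by rw [hqt0]; exact ne_of_gt hDpos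
  have hQuot := hN.fun_div hD hDne
  have hgD : HasDerivAt (fun t => mabeJ P (qt t))
      (P a - (Real.exp (qstar a) * (qstar a + 1) * D - N * Real.exp (qstar a)) / D ^ 2) 0 := by
    have heq : (fun t => mabeJ P (qt t)) =
        fun t => (∑ i, P i * qt t i) -
          (∑ i, Real.exp (qt t i) * qt t i) / (∑ j, Real.exp (qt t j)) := by
      funext t
      simp only [mabeJ, softmax]
      congr 1
      rw [Finset.sum_div]
      congr 1; funext i; ring
    rw [heq]
    have := hA.fun_sub hQuot
    simpa [hqt0, ← hNdef, ← hDdef] using this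
  have hzero := hg.hasDerivAt_eq_zero hgD
  have hPa : P a = (Real.exp (qstar a) * (qstar a + 1) * D - N * Real.exp (qstar a)) / D ^ 2 := by
    linarith [hzero]
  have hS : (∑ b, softmax qstar b * qstar b) = N / D := by
    simp only [softmax, hNdef]
    rw [Finset.sum_div]
    congr 1; funext i; ring
  rw [hS, hPa, softmax]
  field_simp
  ring

/-- At a local maximum of the tabular MABE objective, the dual probabilities
form a genuine probability distribution: no clipping or renormalization needed. -/
theorem dual_prob_is_prob_at_optimum {d : ℕ} (hd : 1 ≤ d) (P : Fin d → ℝ)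
    (hP0 : ∀ i, 0 ≤ P i) (hP1 : ∑ i, P i = 1)
    (qstar : Fin d → ℝ) (hmax : IsLocalMax (mabeJ P) qstar) :
    (∀ a, 0 ≤ softmax qstar a * (1 + qstar a - ∑ b, softmax qstar b * qstar b)) ∧
    (∀ a, softmax qstar a * (1 + qstar a - ∑ b, softmax qstar b * qstar b) ≤ 1) ∧
    (∑ a, softmax qstar a * (1 + qstar a - ∑ b, softmax qstar b * qstar b)) = 1 := by
  have key := dual_eq_P hd P qstar hmax
  refine ⟨fun a => by rw [key a]; exact hP0 a, fun a => ?_, by simp [key, hP1]⟩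
  rw [key a, ← hP1]
  exact Finset.single_le_sum (fun i _ => hP0 i) (Finset.mem_univ a)
end
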